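/- Let X = {a_1,…,a_ℓ} be a finite set of ℓ distinct points and N ≥ 2. For any λ ∈ P_{1/N}(X), the two-point marginal of γ_λ is given by M_2γ_λ = (N/(N−1)) λ ⊗ λ − (1/(N−1)) Σ_{i=1}^ℓ λ({a_i}) δ_{a_i} ⊗ δ_{a_i}; equivalently, (M_2γ_λ)(a_i,a_j) = (N/(N−1)) λ({a_i}) λ({a_j}) for i ≠ j and (M_2γ_λ)(a_i,a_i) = (N/(N−1)) λ({a_i})^2 − (1/(N−1)) λ({a_i}). -/

import Mathlib

open Finset

noncomputable def symmetrize (N ℓ : ℕ) (γ : (Fin N → Fin ℓ) → ℝ) : (Fin N → Fin ℓ) → ℝ :=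
  fun x => (1 / (Nat.factorial N : ℝ)) * ∑ σ : Equiv.Perm (Fin N), γ (x ∘ σ)

def IsProbVec {α : Type*} [Fintype α] (p : α → ℝ) : Prop :=
  (∀ x, 0 ≤ p x) ∧ ∑ x, p x = 1

def IsSymmFun (N ℓ : ℕ) (γ : (Fin N → Fin ℓ) → ℝ) : Prop :=
  ∀ (σ : Equiv.Perm (Fin N)) (x : Fin N → Fin ℓ), γ (x ∘ σ) = γ x

def PSym (N ℓ : ℕ) : Set ((Fin N → Fin ℓ) → ℝ) :=
  {γ | IsProbVec γ ∧ IsSymmFun N ℓ γ}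

noncomputable def margOf (N ℓ : ℕ) (x : Fin N → Fin ℓ) : Fin ℓ → ℝ :=
  fun j => ((Finset.univ.filter fun k => x k = j).card : ℝ) / (N : ℝ)

noncomputable def QuantFinset (N ℓ : ℕ) : Finset (Fin ℓ → ℝ) :=
  Finset.image (margOf N ℓ) Finset.univ

noncomputable def gammaLam (N ℓ : ℕ) (lam : Fin ℓ → ℝ) : (Fin N → Fin ℓ) → ℝ :=
  if h : ∃ i : Fin N → Fin ℓ, margOf N ℓ i = lam then
    symmetrize N ℓ (fun x => if x = h.choose then 1 else 0)
  else 0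

noncomputable def marg1 (N ℓ : ℕ) [NeZero N] (γ : (Fin N → Fin ℓ) → ℝ) : Fin ℓ → ℝ :=
  fun j => ∑ x : Fin N → Fin ℓ, if x 0 = j then γ x else 0

noncomputable def marg2 (N ℓ : ℕ) [NeZero N] (γ : (Fin N → Fin ℓ) → ℝ) : Fin ℓ → Fin ℓ → ℝ :=
  fun j k => ∑ x : Fin N → Fin ℓ, if x 0 = j ∧ x 1 = k then γ x else 0

noncomputable def cCoef (N ℓ : ℕ) (c : (Fin N → Fin ℓ) → ℝ) (lam : Fin ℓ → ℝ) : ℝ :=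
  ∑ x : Fin N → Fin ℓ, gammaLam N ℓ lam x * c x

/- ### Auxiliary lemmas -/

lemma perm_pair_exists {N : ℕ} (a b c d : Fin N) (hab : a ≠ b) (hcd : c ≠ d) :
    ∃ π : Equiv.Perm (Fin N), π a = c ∧ π b = d := by
  refine ⟨(Equiv.swap (Equiv.swap a c b) d) * (Equiv.swap a c), ?_, ?_⟩
  · have h1 : c ≠ Equiv.swap a c b := by
      intro h
      apply hab
      have := congrArg (Equiv.swap a c) h
      simpa using this
    simp [Equiv.Perm.mul_apply, Equiv.swap_apply_left,
      Equiv.swap_apply_of_ne_of_ne h1 hcd]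
  · simp [Equiv.Perm.mul_apply]

lemma fiber_card_eq {N : ℕ} (u v : Fin N) (a b c d : Fin N) (hab : a ≠ b) (hcd : c ≠ d) :
    ((Finset.univ : Finset (Equiv.Perm (Fin N))).filter fun τ => τ u = a ∧ τ v = b).card
      = ((Finset.univ : Finset (Equiv.Perm (Fin N))).filter fun τ => τ u = c ∧ τ v = d).card := by
  obtain ⟨π, hπa, hπb⟩ := perm_pair_exists a b c d hab hcd
  refine Finset.card_bij' (fun τ _ => π * τ) (fun τ _ => π⁻¹ * τ) ?_ ?_ ?_ ?_
  · intro τ hτ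
    simp only [Finset.mem_filter, Finset.mem_univ, true_and] at hτ ⊢
    simp [Equiv.Perm.mul_apply, hτ.1, hτ.2, hπa, hπb]
  · intro τ hτ
    simp only [Finset.mem_filter, Finset.mem_univ, true_and] at hτ ⊢
    constructor
    · apply π.injective; simp [Equiv.Perm.mul_apply, hτ.1, hπa]
    · apply π.injective; simp [Equiv.Perm.mul_apply, hτ.2, hπb]
  · intro τ _; group
  · intro τ _; group

lemma perm_sum_eq {N ℓ : ℕ} (hN : 2 ≤ N) (u v : Fin N) (huv : u ≠ v)
    (x₀ : Fin N → Fin ℓ) (i j : Fin ℓ) :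
    ∃ K : ℕ, K * (N * (N - 1)) = N.factorial ∧
      ∑ τ : Equiv.Perm (Fin N), (if x₀ (τ u) = i ∧ x₀ (τ v) = j then (1:ℝ) else 0)
        = (K : ℝ) *
          (((Finset.univ : Finset (Fin N)).offDiag.filter
              fun p => x₀ p.1 = i ∧ x₀ p.2 = j).card : ℝ) := by
  classical
  set a₀ : Fin N := ⟨0, by omega⟩
  set b₀ : Fin N := ⟨1, by omega⟩
  have hab : a₀ ≠ b₀ := by simp [a₀, b₀, Fin.ext_iff]
  set K : ℕ := ((Finset.univ : Finset (Equiv.Perm (Fin N))).filter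
      fun τ => τ u = a₀ ∧ τ v = b₀).card with hK
  have hfib : ∀ p : Fin N × Fin N, p.1 ≠ p.2 →
      ((Finset.univ : Finset (Equiv.Perm (Fin N))).filter fun τ => (τ u, τ v) = p).card = K := by
    intro p hp
    have : ((Finset.univ : Finset (Equiv.Perm (Fin N))).filter fun τ => (τ u, τ v) = p)
        = ((Finset.univ : Finset (Equiv.Perm (Fin N))).filter fun τ => τ u = p.1 ∧ τ v = p.2) := by
      apply Finset.filter_congr; intro τ _; simp [Prod.ext_iff]
    rw [this, fiber_card_eq u v p.1 p.2 a₀ b₀ hp hab]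
  have hmaps : ∀ τ : Equiv.Perm (Fin N), τ ∈ (Finset.univ : Finset (Equiv.Perm (Fin N))) →
      (τ u, τ v) ∈ (Finset.univ : Finset (Fin N)).offDiag := by
    intro τ _
    simp only [Finset.mem_offDiag, Finset.mem_univ, true_and]
    exact fun h => huv (τ.injective h)
  refine ⟨K, ?_, ?_⟩
  · have h1 := Finset.card_eq_sum_card_fiberwise hmaps
    have h2 : ∑ p ∈ (Finset.univ : Finset (Fin N)).offDiag,
        ((Finset.univ : Finset (Equiv.Perm (Fin N))).filter fun τ => (τ u, τ v) = p).card
        = (Finset.univ : Finset (Fin N)).offDiag.card * K := by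
      rw [Finset.sum_congr rfl (fun p hp => hfib p (Finset.mem_offDiag.mp hp).2.2)]
      simp [Finset.sum_const, mul_comm]
    have h3 : (Finset.univ : Finset (Fin N)).offDiag.card = N * (N - 1) := by
      rw [Finset.offDiag_card]
      simp [Nat.mul_sub]
    have h4 : ((Finset.univ : Finset (Equiv.Perm (Fin N))).card) = N.factorial := by
      simp [Finset.card_univ, Fintype.card_perm, Fintype.card_fin]
    rw [mul_comm, ← h3, ← h2, ← h1, h4]
  · rw [← Finset.sum_fiberwise_of_maps_to hmaps
      (fun τ => if x₀ (τ u) = i ∧ x₀ (τ v) = j then (1:ℝ) else 0)]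
    have : ∀ p ∈ (Finset.univ : Finset (Fin N)).offDiag,
        ∑ τ ∈ (Finset.univ : Finset (Equiv.Perm (Fin N))).filter (fun τ => (τ u, τ v) = p),
          (if x₀ (τ u) = i ∧ x₀ (τ v) = j then (1:ℝ) else 0)
        = (K : ℝ) * (if x₀ p.1 = i ∧ x₀ p.2 = j then (1:ℝ) else 0) := by
      intro p hp
      have hp' := (Finset.mem_offDiag.mp hp).2.2
      rw [Finset.sum_congr rfl (fun τ hτ => by
        have := (Finset.mem_filter.mp hτ).2
        rw [show x₀ (τ u) = x₀ p.1 by rw [← this]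
          , show x₀ (τ v) = x₀ p.2 by rw [← this]])]
      rw [Finset.sum_const, hfib p hp']
      simp [mul_comm]
    rw [Finset.sum_congr rfl this, ← Finset.mul_sum, Finset.sum_boole]

lemma marg2_symm {N ℓ : ℕ} [NeZero N] (x₀ : Fin N → Fin ℓ) (i j : Fin ℓ) :
    marg2 N ℓ (symmetrize N ℓ (fun x => if x = x₀ then (1:ℝ) else 0)) i j
      = (1 / (N.factorial : ℝ)) *
        ∑ τ : Equiv.Perm (Fin N), (if x₀ (τ 0) = i ∧ x₀ (τ 1) = j then (1:ℝ) else 0) := by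
  classical
  have hcond : ∀ (x : Fin N → Fin ℓ) (σ : Equiv.Perm (Fin N)),
      (x ∘ ⇑σ = x₀) ↔ x = x₀ ∘ ⇑σ⁻¹ := by
    intro x σ
    constructor
    · intro h; funext k
      have := congrFun h (σ⁻¹ k); simpa using this
    · intro h; subst h; funext k; simp
  simp only [marg2, symmetrize]
  calc ∑ x : Fin N → Fin ℓ, (if x 0 = i ∧ x 1 = j then
          (1/(N.factorial:ℝ)) * ∑ σ : Equiv.Perm (Fin N), (if x ∘ ⇑σ = x₀ then (1:ℝ) else 0) else 0)
      = ∑ x : Fin N → Fin ℓ, ∑ σ : Equiv.Perm (Fin N),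
          (1/(N.factorial:ℝ)) * (if x = x₀ ∘ ⇑σ⁻¹ then (if x 0 = i ∧ x 1 = j then (1:ℝ) else 0) else 0) := by
        refine Finset.sum_congr rfl fun x _ => ?_
        rw [← Finset.mul_sum]
        by_cases hx : x 0 = i ∧ x 1 = j
        · simp only [hx, and_self, if_true]
          congr 1
          refine Finset.sum_congr rfl fun σ _ => ?_
          simp [hcond x σ]
        · simp [hx]
    _ = ∑ σ : Equiv.Perm (Fin N), (1/(N.factorial:ℝ)) * ∑ x : Fin N → Fin ℓ,
          (if x = x₀ ∘ ⇑σ⁻¹ then (if x 0 = i ∧ x 1 = j then (1:ℝ) else 0) else 0) := by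
        rw [Finset.sum_comm]
        exact Finset.sum_congr rfl fun σ _ => by rw [Finset.mul_sum]
    _ = ∑ σ : Equiv.Perm (Fin N), (1/(N.factorial:ℝ)) *
          (if x₀ (σ⁻¹ 0) = i ∧ x₀ (σ⁻¹ 1) = j then (1:ℝ) else 0) := by
        refine Finset.sum_congr rfl fun σ _ => ?_
        rw [Finset.sum_ite_eq' Finset.univ (x₀ ∘ ⇑σ⁻¹)]
        simp [Function.comp]
    _ = (1/(N.factorial:ℝ)) * ∑ τ : Equiv.Perm (Fin N),
          (if x₀ (τ 0) = i ∧ x₀ (τ 1) = j then (1:ℝ) else 0) := by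
        rw [← Finset.mul_sum]
        congr 1
        exact Fintype.sum_equiv (Equiv.inv _) _ _ (fun σ => rfl)

lemma count_pairs_ne {N ℓ : ℕ} (x₀ : Fin N → Fin ℓ) {i j : Fin ℓ} (hij : i ≠ j) :
    ((Finset.univ : Finset (Fin N)).offDiag.filter fun p => x₀ p.1 = i ∧ x₀ p.2 = j)
      = (Finset.univ.filter fun k => x₀ k = i) ×ˢ (Finset.univ.filter fun k => x₀ k = j) := by
  ext ⟨a, b⟩
  simp only [Finset.mem_filter, Finset.mem_offDiag, Finset.mem_product, Finset.mem_univ,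
    true_and]
  constructor
  · rintro ⟨-, h⟩; exact h
  · rintro ⟨h1, h2⟩
    exact ⟨fun h => hij (by rw [← h1, ← h2, h]), h1, h2⟩

lemma count_pairs_eq {N ℓ : ℕ} (x₀ : Fin N → Fin ℓ) (i : Fin ℓ) :
    ((Finset.univ : Finset (Fin N)).offDiag.filter fun p => x₀ p.1 = i ∧ x₀ p.2 = i)
      = (Finset.univ.filter fun k => x₀ k = i).offDiag := by
  ext ⟨a, b⟩
  simp only [Finset.mem_filter, Finset.mem_offDiag, Finset.mem_univ, true_and]
  tauto

/-- explicit formula for the two-point marginal of γ_λ: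
M₂γ_λ = (N/(N−1)) λ⊗λ − (1/(N−1)) Σ_i λ({a_i}) δ_{a_i}⊗δ_{a_i}. -/
theorem two_marginal_of_gammaLam (ℓ N : ℕ) [NeZero N] (hN : 2 ≤ N)
    (lam : Fin ℓ → ℝ) (hlam : lam ∈ QuantFinset N ℓ) :
    (∀ i j : Fin ℓ, i ≠ j →
        marg2 N ℓ (gammaLam N ℓ lam) i j
          = ((N : ℝ) / ((N : ℝ) - 1)) * lam i * lam j)
    ∧ (∀ i : Fin ℓ,
        marg2 N ℓ (gammaLam N ℓ lam) i i
          = ((N : ℝ) / ((N : ℝ) - 1)) * (lam i) ^ 2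
            - (1 / ((N : ℝ) - 1)) * lam i) := by
  classical
  have h : ∃ x : Fin N → Fin ℓ, margOf N ℓ x = lam := by
    simpa [QuantFinset, Finset.mem_image] using hlam
  have hγ : gammaLam N ℓ lam
      = symmetrize N ℓ (fun x => if x = h.choose then (1:ℝ) else 0) := by
    rw [gammaLam, dif_pos h]
  set x₀ := h.choose with hx₀
  have hx₀lam : margOf N ℓ x₀ = lam := h.choose_spec
  have h01 : (0 : Fin N) ≠ 1 := by
    intro hq
    have := congrArg Fin.val hq
    simp [Fin.val_one'] at this
    omega
  have hN0 : (N : ℝ) ≠ 0 := by positivity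
  have hN1 : (N : ℝ) - 1 ≠ 0 := by
    have : (2 : ℝ) ≤ N := by exact_mod_cast hN
    linarith
  have hfac : (N.factorial : ℝ) ≠ 0 := by
    exact_mod_cast N.factorial_ne_zero
  constructor
  · intro i j hij
    obtain ⟨K, hK, hsum⟩ := perm_sum_eq hN 0 1 h01 x₀ i j
    rw [hγ, marg2_symm, hsum, count_pairs_ne x₀ hij, Finset.card_product]
    have hlami : lam i = ((Finset.univ.filter fun k => x₀ k = i).card : ℝ) / N := by
      rw [← hx₀lam]; rfl
    have hlamj : lam j = ((Finset.univ.filter fun k => x₀ k = j).card : ℝ) / N := by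
      rw [← hx₀lam]; rfl
    have hKr : (K : ℝ) * ((N : ℝ) * ((N : ℝ) - 1)) = (N.factorial : ℝ) := by
      have := congrArg (Nat.cast : ℕ → ℝ) hK
      push_cast [Nat.cast_sub (show 1 ≤ N by omega)] at this
      linarith [this]
    have hKfrac : (K : ℝ) = (N.factorial : ℝ) / ((N:ℝ) * ((N:ℝ)-1)) := by
      rw [eq_div_iff (by exact mul_ne_zero hN0 hN1)]; exact hKr
    rw [hlami, hlamj, hKfrac]
    try push_cast
    field_simp
  · intro i
    obtain ⟨K, hK, hsum⟩ := perm_sum_eq hN 0 1 h01 x₀ i i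
    rw [hγ, marg2_symm, hsum, count_pairs_eq x₀ i, Finset.offDiag_card]
    set n : ℕ := (Finset.univ.filter fun k => x₀ k = i).card with hn
    have hlami : lam i = (n : ℝ) / N := by rw [← hx₀lam]; rfl
    have hKr : (K : ℝ) * ((N : ℝ) * ((N : ℝ) - 1)) = (N.factorial : ℝ) := by
      have := congrArg (Nat.cast : ℕ → ℝ) hK
      push_cast [Nat.cast_sub (show 1 ≤ N by omega)] at this
      linarith [this]
    have hnn : n ≤ n * n := by
      rcases Nat.eq_zero_or_pos n with h0 | h0
      · simp [h0]
      · exact Nat.le_mul_of_pos_left n h0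
    have hKfrac : (K : ℝ) = (N.factorial : ℝ) / ((N:ℝ) * ((N:ℝ)-1)) := by
      rw [eq_div_iff (by exact mul_ne_zero hN0 hN1)]; exact hKr
    rw [hlami, hKfrac]
    push_cast [Nat.cast_sub hnn]
    field_simp
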